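/- (May's Theorem) A two-alternative social choice function F : {-1,0,1}^n -> {-1,0,1} equals the sign of the sum of votes (simple majority rule) if and only if F is egalitarian (invariant under permutation of voters), strongly neutral (F(-D) = -F(D) for all D), and strongly monotonic (D >= D' componentwise implies F(D) >= F(D'), and if additionally D > D' in some component with F(D') = 0 then F(D) = 1). -/

import Mathlib

/-- A ballot profile assigns each of the `n` voters a vote in {-1, 0, 1}. -/
abbrev Profile (n : ℕ) := Fin n → SignType

/-- Simple majority rule: the sign of the sum of the votes. -/
noncomputable def simpleMajority {n : ℕ} (D : Profile n) : SignType :=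
  SignType.sign (∑ i, (D i : ℤ))

/-- `F` is egalitarian: invariant under permutations of the voters. -/
def Egalitarian {n : ℕ} (F : Profile n → SignType) : Prop :=
  ∀ (σ : Equiv.Perm (Fin n)) (D : Profile n), F (D ∘ σ) = F D

/-- `F` is strongly neutral: `F (-D) = -F D`. -/
def StronglyNeutral {n : ℕ} (F : Profile n → SignType) : Prop :=
  ∀ D : Profile n, F (fun i => -D i) = -F D

/-- `F` is strongly monotonic: it is monotone componentwise, and raising some
vote strictly from a profile with outcome 0 yields outcome 1. -/
def StronglyMonotonic {n : ℕ} (F : Profile n → SignType) : Prop :=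
  (∀ D D' : Profile n, (∀ i, D' i ≤ D i) → F D' ≤ F D) ∧
  (∀ D D' : Profile n, (∀ i, D' i ≤ D i) → (∃ i, D' i < D i) → F D' = 0 → F D = 1)

lemma coe_le_coe_int {a b : SignType} (h : a ≤ b) : (a : ℤ) ≤ b := by
  cases a <;> cases b <;> simp_all

lemma coe_lt_coe_int {a b : SignType} (h : a < b) : (a : ℤ) < b := by
  cases a <;> cases b <;> simp_all

lemma May_sign_mono {a b : ℤ} (h : a ≤ b) : SignType.sign a ≤ SignType.sign b := by
  rcases lt_trichotomy a 0 with h1|h1|h1 <;> rcases lt_trichotomy b 0 with h2|h2|h2 <;>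
    simp_all [sign_pos, sign_neg, sign_zero] <;> omega

/-- Sum of a profile equals (#positive votes) − (#negative votes). -/
lemma sum_eq_card_sub_card {n : ℕ} (D : Profile n) :
    ∑ i, (D i : ℤ) =
      (Finset.univ.filter (fun i => D i = 1)).card
        - (Finset.univ.filter (fun i => D i = -1)).card := by
  have : ∀ i, (D i : ℤ) =
      (if D i = 1 then (1:ℤ) else 0) - (if D i = -1 then (1:ℤ) else 0) := by
    intro i; cases h : D i <;> simp
  rw [Finset.sum_congr rfl fun i _ => this i, Finset.sum_sub_distrib]
  simp [Finset.sum_ite_eq, Finset.sum_boole]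

/-- If the positive and negative vote counts are equal, any egalitarian F gives 0. -/
lemma May_balanced_zero {n : ℕ} {F : Profile n → SignType}
    (hE : Egalitarian F) (hN : StronglyNeutral F) (D : Profile n)
    (h : (Finset.univ.filter (fun i => D i = 1)).card
        = (Finset.univ.filter (fun i => D i = -1)).card) : F D = 0 := by
  set A := Finset.univ.filter (fun i => D i = 1) with hA
  set B := Finset.univ.filter (fun i => D i = -1) with hB
  have e : (A : Finset (Fin n)) ≃ (B : Finset (Fin n)) := Finset.equivOfCardEq h
  classical
  set f : Fin n → Fin n := fun i =>
    if hi : i ∈ A then (e ⟨i, hi⟩ : Fin n)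
    else if hi : i ∈ B then (e.symm ⟨i, hi⟩ : Fin n) else i with hf
  have hAB : ∀ i, i ∈ A → i ∉ B := by
    intro i hi hib
    simp [hA, hB] at hi hib; rw [hi] at hib; exact absurd hib (by decide)
  have hinv : Function.Involutive f := by
    intro i
    by_cases hi : i ∈ A
    · have h1 : (e ⟨i, hi⟩ : Fin n) ∈ B := (e ⟨i, hi⟩).2
      have h2 : (e ⟨i, hi⟩ : Fin n) ∉ A := fun hc => hAB _ hc h1
      simp only [hf, dif_pos hi, dif_neg h2, dif_pos h1]
      exact congrArg Subtype.val (e.symm_apply_apply ⟨i, hi⟩)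
    · by_cases hi' : i ∈ B
      · have h1 : (e.symm ⟨i, hi'⟩ : Fin n) ∈ A := (e.symm ⟨i, hi'⟩).2
        simp only [hf, dif_neg hi, dif_pos hi', dif_pos h1]
        exact congrArg Subtype.val (e.apply_symm_apply ⟨i, hi'⟩)
      · simp only [hf, dif_neg hi, dif_neg hi']
  have hDf : ∀ i, D (f i) = -D i := by
    intro i
    by_cases hi : i ∈ A
    · have h1 : (e ⟨i, hi⟩ : Fin n) ∈ B := (e ⟨i, hi⟩).2
      have hDi : D i = 1 := by simpa [hA] using hi
      have : D ((e ⟨i, hi⟩ : Fin n)) = -1 := by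
        exact (Finset.mem_filter.mp h1).2
      simp [hf, dif_pos hi, this, hDi]
    · by_cases hi' : i ∈ B
      · have h1 : (e.symm ⟨i, hi'⟩ : Fin n) ∈ A := (e.symm ⟨i, hi'⟩).2
        have hDi : D i = -1 := by simpa [hB] using hi'
        have : D ((e.symm ⟨i, hi'⟩ : Fin n)) = 1 := by
          exact (Finset.mem_filter.mp h1).2
        simp [hf, dif_neg hi, dif_pos hi', this, hDi]
      · have hDi : D i = 0 := by
          cases h0 : D i
          · rfl
          · exact absurd (by simp [hB, h0]) hi'
          · exact absurd (by simp [hA, h0]) hi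
        simp [hf, dif_neg hi, dif_neg hi', hDi]
  have key : F D = - F D := by
    have h1 : F (D ∘ hinv.toPerm) = F D := hE hinv.toPerm D
    have h2 : D ∘ hinv.toPerm = fun i => -D i := by
      funext i; exact hDf i
    rw [h2, hN] at h1
    exact h1.symm
  cases h0 : F D <;> rw [h0] at key <;> simp_all

/-- If strictly more voters vote 1 than -1, then F gives 1. -/
lemma May_pos {n : ℕ} {F : Profile n → SignType}
    (hE : Egalitarian F) (hN : StronglyNeutral F) (hm : StronglyMonotonic F)
    (D : Profile n)
    (h : (Finset.univ.filter (fun i => D i = -1)).card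
        < (Finset.univ.filter (fun i => D i = 1)).card) : F D = 1 := by
  classical
  set A := Finset.univ.filter (fun i => D i = 1) with hA
  set B := Finset.univ.filter (fun i => D i = -1) with hB
  obtain ⟨C, hCA, hC⟩ := Finset.exists_subset_card_eq
    (show A.card - B.card ≤ A.card by omega)
  set D' : Profile n := fun i => if i ∈ C then 0 else D i with hD'
  have hDC : ∀ i ∈ C, D i = 1 := fun i hi => (Finset.mem_filter.mp (hCA hi)).2
  have hle : ∀ i, D' i ≤ D i := by
    intro i
    by_cases hi : i ∈ C
    · simp only [hD', if_pos hi, hDC i hi]; decide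
    · simp [hD', if_neg hi]
  have hA' : Finset.univ.filter (fun i => D' i = 1) = A \ C := by
    ext i
    by_cases hi : i ∈ C
    · simp only [Finset.mem_filter, Finset.mem_sdiff, hD', if_pos hi]
      simp [hi]
    · simp only [Finset.mem_filter, Finset.mem_sdiff, hD', if_neg hi, hA]
      simp [hi]
  have hB' : Finset.univ.filter (fun i => D' i = -1) = B := by
    ext i
    by_cases hi : i ∈ C
    · simp only [Finset.mem_filter, hD', if_pos hi]
      have : i ∉ B := by
        rw [hB, Finset.mem_filter]
        simp [hDC i hi]
      simp [this]
    · simp only [Finset.mem_filter, hD', if_neg hi, hB]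
  have hbal : F D' = 0 := by
    apply May_balanced_zero hE hN
    rw [hA', hB', Finset.card_sdiff_of_subset hCA, hC]
    omega
  have hne : C.Nonempty := by
    rw [← Finset.card_pos, hC]; omega
  obtain ⟨i0, hi0⟩ := hne
  have hstrict : D' i0 < D i0 := by
    simp only [hD', if_pos hi0, hDC i0 hi0]; decide
  exact hm.2 D D' hle ⟨i0, hstrict⟩ hbal

/-- (May's Theorem) A two-alternative social choice function is simple majority
rule iff it is egalitarian, strongly neutral and strongly monotonic. -/
theorem mays_theorem {n : ℕ} (F : Profile n → SignType) :
    F = simpleMajority ↔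
      Egalitarian F ∧ StronglyNeutral F ∧ StronglyMonotonic F := by
  constructor
  · rintro rfl
    refine ⟨?_, ?_, ?_, ?_⟩
    · intro σ D
      unfold simpleMajority
      congr 1
      exact Equiv.sum_comp σ (fun i => (D i : ℤ))
    · intro D
      unfold simpleMajority
      have : ∀ i, ((-D i : SignType) : ℤ) = -(D i : ℤ) := by
        intro i; cases D i <;> simp
      simp only [this, Finset.sum_neg_distrib]
      exact Left.sign_neg _
    · intro D D' hle
      exact May_sign_mono (Finset.sum_le_sum fun i _ => coe_le_coe_int (hle i))
    · intro D D' hle ⟨i0, hi0⟩ h0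
      unfold simpleMajority at *
      have hs0 : ∑ i, (D' i : ℤ) = 0 := sign_eq_zero_iff.mp h0
      have : (0:ℤ) < ∑ i, (D i : ℤ) := by
        rw [← hs0]
        exact Finset.sum_lt_sum (fun i _ => coe_le_coe_int (hle i))
          ⟨i0, Finset.mem_univ i0, coe_lt_coe_int hi0⟩
      exact sign_pos this
  · rintro ⟨hE, hN, hm⟩
    funext D
    classical
    set p := (Finset.univ.filter (fun i => D i = 1)).card with hp
    set m := (Finset.univ.filter (fun i => D i = -1)).card with hmm
    have hsum : ∑ i, (D i : ℤ) = (p : ℤ) - m := sum_eq_card_sub_card D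
    rcases lt_trichotomy p m with hlt | heq | hgt
    · -- more -1s: apply May_pos to -D
      have hneg1 : (Finset.univ.filter (fun i => (-D i : SignType) = 1))
          = Finset.univ.filter (fun i => D i = -1) := by
        ext i; simp only [Finset.mem_filter]
        constructor <;> intro ⟨_, h2⟩ <;> refine ⟨Finset.mem_univ i, ?_⟩ <;>
          cases h : D i <;> rw [h] at h2 <;> simp_all
      have hneg2 : (Finset.univ.filter (fun i => (-D i : SignType) = -1))
          = Finset.univ.filter (fun i => D i = 1) := by
        ext i; simp only [Finset.mem_filter]
        constructor <;> intro ⟨_, h2⟩ <;> refine ⟨Finset.mem_univ i, ?_⟩ <;>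
          cases h : D i <;> rw [h] at h2 <;> simp_all
      have h1 : F (fun i => -D i) = 1 := by
        apply May_pos hE hN hm
        rw [hneg1, hneg2]; omega
      rw [hN D] at h1
      have hFD : F D = -1 := by
        cases hfd : F D <;> rw [hfd] at h1 <;> simp_all
      rw [hFD]
      unfold simpleMajority
      rw [hsum]
      symm
      apply sign_neg
      omega
    · have h0 : F D = 0 := May_balanced_zero hE hN D (by omega)
      rw [h0]
      unfold simpleMajority
      rw [hsum]
      symm
      simp [heq]
    · have h1 : F D = 1 := May_pos hE hN hm D (by omega)
      rw [h1]
      unfold simpleMajority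
      rw [hsum]
      symm
      apply sign_pos
      omega
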